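/- (Critical Lorentz embedding) There exists C > 0 such that for every z in the Schwartz space on ℝ³, ‖z‖_{L^∞(ℝ³)} ≤ C·‖∇z‖_{L^{3,1}(ℝ³)}. -/

import Mathlib

open MeasureTheory Set Metric
open scoped ENNReal

noncomputable abbrev E3 := EuclideanSpace ℝ (Fin 3)

lemma polar3 (g : E3 → ℝ≥0∞) (hg : Measurable g) :
    ∫⁻ y, g y = ∫⁻ e : sphere (0:E3) 1, (∫⁻ t in Ioi (0:ℝ),
      ENNReal.ofReal (t^2) * g (t • (e:E3))) ∂(volume.toSphere) := by
  have hdim : Module.finrank ℝ E3 = 3 := by simp [finrank_euclideanSpace]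
  have hcont : Continuous (fun p : sphere (0:E3) 1 × Ioi (0:ℝ) => (p.2 : ℝ) • (p.1 : E3)) := by
    fun_prop
  have hmeas : Measurable (fun p : sphere (0:E3) 1 × Ioi (0:ℝ) => g ((p.2 : ℝ) • (p.1 : E3))) :=
    hg.comp hcont.measurable
  calc ∫⁻ y, g y = ∫⁻ y, g y ∂(volume.restrict {(0:E3)}ᶜ) := by
        rw [restrict_compl_singleton]
    _ = ∫⁻ v : ({(0:E3)}ᶜ : Set E3), g v ∂(volume.comap Subtype.val) := by
        rw [lintegral_subtype_comap (measurableSet_singleton 0).compl]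
    _ = ∫⁻ p : sphere (0:E3) 1 × Ioi (0:ℝ), g ((p.2 : ℝ) • (p.1 : E3))
          ∂((volume.toSphere).prod (Measure.volumeIoiPow (Module.finrank ℝ E3 - 1))) := by
        rw [← (Measure.measurePreserving_homeomorphUnitSphereProd
          (volume : Measure E3)).lintegral_comp hmeas]
        refine lintegral_congr fun v => ?_
        congr 1
        simp [homeomorphUnitSphereProd]
        rw [smul_inv_smul₀ (norm_ne_zero_iff.2 v.2)]
    _ = ∫⁻ e : sphere (0:E3) 1, (∫⁻ t : Ioi (0:ℝ), g ((t:ℝ) • (e:E3))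
          ∂(Measure.volumeIoiPow 2)) ∂(volume.toSphere) := by
        rw [hdim, lintegral_prod _ hmeas.aemeasurable]
    _ = _ := by
        refine lintegral_congr fun e => ?_
        rw [Measure.volumeIoiPow,
          lintegral_withDensity_eq_lintegral_mul _ (by fun_prop) (by fun_prop)]
        rw [← lintegral_subtype_comap measurableSet_Ioi
          (fun t : ℝ => ENNReal.ofReal (t^2) * g (t • (e:E3)))]
        rfl

noncomputable def Kern (x y : E3) : ℝ≥0∞ := (ENNReal.ofReal (‖y - x‖^2))⁻¹

lemma Kern_meas (x : E3) : Measurable (Kern x) := by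
  unfold Kern; fun_prop

lemma ball_kern (r : ℝ) :
    ∫⁻ y in ball (0:E3) r, Kern 0 y = (volume : Measure E3).toSphere univ * ENNReal.ofReal r := by
  rw [← lintegral_indicator (measurableSet_ball (x := (0:E3)) (ε := r)) (Kern 0),
    polar3 _ ((Kern_meas 0).indicator measurableSet_ball)]
  have : ∀ e : sphere (0:E3) 1, ∫⁻ t in Ioi (0:ℝ),
      ENNReal.ofReal (t^2) * (ball (0:E3) r).indicator (Kern 0) (t • (e:E3))
      = ENNReal.ofReal r := by
    intro e
    rw [setLIntegral_congr_fun measurableSet_Ioi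
      (f := fun t => ENNReal.ofReal (t^2) * (ball (0:E3) r).indicator (Kern 0) (t • (e:E3)))
      (g := fun t => (Iio r).indicator (fun _ => 1) t) ?_]
    · rw [lintegral_indicator measurableSet_Iio, Measure.restrict_restrict measurableSet_Iio,
        setLIntegral_one, Iio_inter_Ioi, Real.volume_Ioo, sub_zero]
    · intro t ht
      have ht0 : 0 < t := ht
      have hnorm : ‖t • (e:E3)‖ = t := by
        rw [norm_smul, mem_sphere_zero_iff_norm.1 e.2, mul_one, Real.norm_eq_abs,
          abs_of_pos ht0]
      have hK : Kern 0 (t • (e:E3)) = (ENNReal.ofReal (t^2))⁻¹ := by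
        unfold Kern; rw [sub_zero, hnorm]
      by_cases hlt : t < r
      · have hmem : t • (e:E3) ∈ ball (0:E3) r := by
          rw [mem_ball_zero_iff, hnorm]; exact hlt
        simp only [Set.indicator_of_mem hmem, hK, Set.indicator_of_mem (mem_Iio.2 hlt)]
        exact ENNReal.mul_inv_cancel (ENNReal.ofReal_pos.2 (pow_pos ht0 2)).ne' ENNReal.ofReal_ne_top
      · have hmem : t • (e:E3) ∉ ball (0:E3) r := by
          rw [mem_ball_zero_iff, hnorm]; exact hlt
        simp only [Set.indicator_of_notMem hmem, Set.indicator_of_notMem (fun h => hlt h : t ∉ Iio r), mul_zero]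
  simp only [this]
  rw [lintegral_const, mul_comm]

lemma ball_kern' (x : E3) (r : ℝ) :
    ∫⁻ y in ball x r, Kern x y
      = (volume : Measure E3).toSphere univ * ENNReal.ofReal r := by
  rw [← lintegral_indicator (measurableSet_ball (x := x) (ε := r)) (Kern x)]
  have : ∀ y : E3, (ball x r).indicator (Kern x) y
      = ((ball (0:E3) r).indicator (Kern 0)) (y + (-x)) := by
    intro y
    have hmem : y + (-x) ∈ ball (0:E3) r ↔ y ∈ ball x r := by
      rw [mem_ball_zero_iff, mem_ball_iff_norm, sub_eq_add_neg]
    have hK : Kern 0 (y + (-x)) = Kern x y := by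
      unfold Kern; rw [sub_zero, sub_eq_add_neg]
    by_cases h : y ∈ ball x r
    · rw [Set.indicator_of_mem h, Set.indicator_of_mem (hmem.2 h), hK]
    · rw [Set.indicator_of_notMem h, Set.indicator_of_notMem (fun hh => h (hmem.1 hh))]
  simp only [this]
  rw [lintegral_add_right_eq_self (fun y => ((ball (0:E3) r).indicator (Kern 0)) y) (-x),
    lintegral_indicator (measurableSet_ball) (Kern 0), ball_kern]

lemma bathtub (x : E3) (A : Set E3) (hA : MeasurableSet A) :
    ∫⁻ y in A, Kern x y
      ≤ ((volume : Measure E3).toSphere univ * (volume (ball (0:E3) 1))⁻¹ ^ ((1:ℝ)/3))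
          * (volume A) ^ ((1:ℝ)/3) := by
  set σS := (volume : Measure E3).toSphere univ with hσS
  set v := volume (ball (0:E3) 1) with hv
  have hv0 : v ≠ 0 := (measure_ball_pos volume 0 one_pos).ne'
  have hvtop : v ≠ ⊤ := measure_ball_lt_top.ne
  set m := volume A with hm
  by_cases hmtop : m = ⊤
  · rw [hmtop, ENNReal.top_rpow_of_pos (by norm_num), ENNReal.mul_top]
    · exact le_top
    · refine mul_ne_zero ?_ ?_
      · rw [hσS, Measure.toSphere_apply_univ]
        have hd : Module.finrank ℝ E3 = 3 := by simp [finrank_euclideanSpace]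
        rw [hd]
        exact mul_ne_zero (by norm_num) hv0
      · exact (ENNReal.rpow_pos (ENNReal.inv_pos.2 hvtop) (ENNReal.inv_ne_top.2 hv0)).ne'
  -- finite measure case
  set r : ℝ := ((m / v).toReal) ^ ((1:ℝ)/3) with hr
  have hr0 : 0 ≤ r := Real.rpow_nonneg ENNReal.toReal_nonneg _
  have hdvtop : m / v ≠ ⊤ := by
    simp [ENNReal.div_eq_top, hmtop, hv0]
  have hballm : volume (ball x r) = m := by
    have hd : Module.finrank ℝ E3 = 3 := by simp [finrank_euclideanSpace]
    rw [Measure.addHaar_ball volume x hr0, hd]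
    have : r ^ 3 = (m / v).toReal := by
      rw [hr, ← Real.rpow_natCast (((m / v).toReal) ^ ((1:ℝ)/3)) 3, ← Real.rpow_mul
        ENNReal.toReal_nonneg]
      norm_num
    rw [this, ENNReal.ofReal_toReal hdvtop, ← hv, ENNReal.div_mul_cancel hv0 hvtop]
  set B := ball x r with hB
  have hABfin : volume (A ∩ B) ≠ ⊤ :=
    (lt_of_le_of_lt (measure_mono inter_subset_left) (lt_top_iff_ne_top.2 hmtop)).ne
  have hBmeas : MeasurableSet B := measurableSet_ball
  have hdiffeq : volume (A \ B) = volume (B \ A) := by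
    have h1 : volume (A ∩ B) + volume (A \ B) = m := measure_inter_add_diff A hBmeas
    have h2 : volume (A ∩ B) + volume (B \ A) = m := by
      rw [inter_comm]
      rw [← hballm]
      exact measure_inter_add_diff B hA
    rw [← h2] at h1
    exact (ENNReal.add_right_inj hABfin).1 h1
  have hKmeas := Kern_meas x
  have key : ∫⁻ y in A, Kern x y ≤ ∫⁻ y in B, Kern x y := by
    have hsplitA : (∫⁻ y in A ∩ B, Kern x y) + ∫⁻ y in A \ B, Kern x y
        = ∫⁻ y in A, Kern x y := lintegral_inter_add_diff _ A hBmeas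
    have hsplitB : (∫⁻ y in B ∩ A, Kern x y) + ∫⁻ y in B \ A, Kern x y
        = ∫⁻ y in B, Kern x y := lintegral_inter_add_diff _ B hA
    rw [← hsplitA, ← hsplitB, inter_comm B A]
    refine add_le_add le_rfl ?_
    have hup : ∫⁻ y in A \ B, Kern x y ≤ (ENNReal.ofReal (r^2))⁻¹ * volume (A \ B) := by
      rw [← setLIntegral_const (A \ B) ((ENNReal.ofReal (r^2))⁻¹)]
      refine setLIntegral_mono measurable_const fun y hy => ?_
      have : r ≤ ‖y - x‖ := by
        have := hy.2
        rw [hB, mem_ball_iff_norm, not_lt] at this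
        exact this
      unfold Kern
      exact ENNReal.inv_le_inv.2 (ENNReal.ofReal_le_ofReal (by nlinarith))
    have hlow : (ENNReal.ofReal (r^2))⁻¹ * volume (B \ A) ≤ ∫⁻ y in B \ A, Kern x y := by
      rw [← setLIntegral_const (B \ A) ((ENNReal.ofReal (r^2))⁻¹)]
      refine setLIntegral_mono hKmeas fun y hy => ?_
      have hlt : ‖y - x‖ < r := by
        have := hy.1
        rwa [hB, mem_ball_iff_norm] at this
      unfold Kern
      refine ENNReal.inv_le_inv.2 (ENNReal.ofReal_le_ofReal ?_)
      have h0 : 0 ≤ ‖y - x‖ := norm_nonneg _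
      nlinarith
    calc ∫⁻ y in A \ B, Kern x y ≤ (ENNReal.ofReal (r^2))⁻¹ * volume (A \ B) := hup
      _ = (ENNReal.ofReal (r^2))⁻¹ * volume (B \ A) := by rw [hdiffeq]
      _ ≤ ∫⁻ y in B \ A, Kern x y := hlow
  refine key.trans ?_
  rw [hB, ball_kern' x r]
  have hofr : ENNReal.ofReal r = (m / v) ^ ((1:ℝ)/3) := by
    rw [hr, ENNReal.toReal_rpow, ENNReal.ofReal_toReal]
    exact ENNReal.rpow_ne_top_of_nonneg (by norm_num) hdvtop
  rw [hofr, ENNReal.div_eq_inv_mul, ENNReal.mul_rpow_of_nonneg _ _ (by norm_num : (0:ℝ) ≤ 1/3),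
    mul_assoc]

lemma ray_ftc (z : SchwartzMap E3 ℝ) (x : E3) (e : E3) (he : ‖e‖ = 1) :
    ENNReal.ofReal |z x| ≤ ∫⁻ t in Ioi (0:ℝ),
      ENNReal.ofReal ‖fderiv ℝ z (x + t • e)‖ := by
  set L := ∫⁻ t in Ioi (0:ℝ), ENNReal.ofReal ‖fderiv ℝ z (x + t • e)‖ with hL
  have hsmooth := z.smooth ⊤
  have hdz : Differentiable ℝ z := hsmooth.differentiable (by simp)
  have hfc : Continuous (fderiv ℝ (⇑z)) := hsmooth.continuous_fderiv (by simp)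
  have hgc : Continuous fun t : ℝ => ‖fderiv ℝ (⇑z) (x + t • e)‖ := by fun_prop
  have step : ∀ n : ℕ, ENNReal.ofReal |z x|
      ≤ ENNReal.ofReal |z (x + (n:ℝ) • e)| + L := by
    intro n
    set φ' : ℝ → ℝ := fun t => fderiv ℝ (⇑z) (x + t • e) e with hφ'
    have hderiv : ∀ t ∈ uIcc (0:ℝ) (n:ℝ),
        HasDerivAt (fun t : ℝ => z (x + t • e)) (φ' t) t := by
      intro t _
      have hψ : HasDerivAt (fun t : ℝ => x + t • e) e t := by
        simpa using ((hasDerivAt_id t).smul_const e).const_add x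
      exact (hdz (x + t • e)).hasFDerivAt.comp_hasDerivAt t hψ
    have hφ'c : Continuous φ' := by fun_prop
    have hftc := intervalIntegral.integral_eq_sub_of_hasDerivAt hderiv
      (hφ'c.intervalIntegrable 0 n)
    have hzx : z x = z (x + (n:ℝ) • e) - ∫ t in (0:ℝ)..(n:ℝ), φ' t := by
      rw [hftc]; simp
    have hreal : |z x| ≤ |z (x + (n:ℝ) • e)|
        + ∫ t in (0:ℝ)..(n:ℝ), ‖fderiv ℝ (⇑z) (x + t • e)‖ := by
      rw [hzx]
      refine (abs_sub _ _).trans (add_le_add le_rfl ?_)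
      rw [← Real.norm_eq_abs]
      refine (intervalIntegral.norm_integral_le_integral_norm n.cast_nonneg).trans ?_
      refine intervalIntegral.integral_mono_on n.cast_nonneg
        (hφ'c.norm.intervalIntegrable 0 n) (hgc.intervalIntegrable 0 n) fun t _ => ?_
      calc ‖φ' t‖ ≤ ‖fderiv ℝ (⇑z) (x + t • e)‖ * ‖e‖ :=
            (fderiv ℝ (⇑z) (x + t • e)).le_opNorm e
        _ = _ := by rw [he, mul_one]
    have hlin : ENNReal.ofReal (∫ t in (0:ℝ)..(n:ℝ), ‖fderiv ℝ (⇑z) (x + t • e)‖) ≤ L := by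
      rw [intervalIntegral.integral_of_le n.cast_nonneg,
        ofReal_integral_eq_lintegral_ofReal
          ((hgc.integrableOn_Icc).mono_set Set.Ioc_subset_Icc_self)
          (ae_of_all _ fun t => norm_nonneg _)]
      exact lintegral_mono_set Set.Ioc_subset_Ioi_self
    calc ENNReal.ofReal |z x|
        ≤ ENNReal.ofReal (|z (x + (n:ℝ) • e)|
            + ∫ t in (0:ℝ)..(n:ℝ), ‖fderiv ℝ (⇑z) (x + t • e)‖) :=
          ENNReal.ofReal_le_ofReal hreal
      _ ≤ ENNReal.ofReal |z (x + (n:ℝ) • e)|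
            + ENNReal.ofReal (∫ t in (0:ℝ)..(n:ℝ), ‖fderiv ℝ (⇑z) (x + t • e)‖) :=
          ENNReal.ofReal_add_le
      _ ≤ _ := add_le_add le_rfl hlin
  -- limit
  obtain ⟨c, hc0, hc⟩ := z.decay 1 0
  have htend : Filter.Tendsto (fun n : ℕ => |z (x + (n:ℝ) • e)|) Filter.atTop (nhds 0) := by
    have hbig : Filter.Tendsto (fun n : ℕ => (n:ℝ) + -‖x‖) Filter.atTop Filter.atTop :=
      Filter.tendsto_atTop_add_const_right _ _ tendsto_natCast_atTop_atTop
    refine squeeze_zero' (Filter.Eventually.of_forall fun n => abs_nonneg _)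
      ?_ (Filter.Tendsto.div_atTop (tendsto_const_nhds (x := c)) hbig)
    filter_upwards [hbig.eventually_gt_atTop 0] with n hn
    have hnorm : (n:ℝ) + -‖x‖ ≤ ‖x + (n:ℝ) • e‖ := by
      have h1 : ‖(n:ℝ) • e‖ ≤ ‖x + (n:ℝ) • e‖ + ‖x‖ := by
        calc ‖(n:ℝ) • e‖ = ‖(x + (n:ℝ) • e) + (-x)‖ := by
              congr 1; abel
          _ ≤ ‖x + (n:ℝ) • e‖ + ‖-x‖ := norm_add_le _ _
          _ = ‖x + (n:ℝ) • e‖ + ‖x‖ := by rw [norm_neg]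
      rw [norm_smul, he, mul_one, Real.norm_natCast] at h1
      linarith
    have hz := hc (x + (n:ℝ) • e)
    rw [pow_one, norm_iteratedFDeriv_zero] at hz
    rw [le_div_iff₀ hn]
    calc |z (x + (n:ℝ) • e)| * ((n:ℝ) + -‖x‖)
        ≤ |z (x + (n:ℝ) • e)| * ‖x + (n:ℝ) • e‖ := by
          exact mul_le_mul_of_nonneg_left hnorm (abs_nonneg _)
      _ ≤ c := by rw [mul_comm]; exact hz
  have htend' : Filter.Tendsto (fun n : ℕ => ENNReal.ofReal |z (x + (n:ℝ) • e)| + L)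
      Filter.atTop (nhds L) := by
    have h0 : Filter.Tendsto (fun n : ℕ => ENNReal.ofReal |z (x + (n:ℝ) • e)|)
        Filter.atTop (nhds 0) := by
      have := ENNReal.tendsto_ofReal htend
      simpa using this
    simpa using h0.add tendsto_const_nhds
  exact ge_of_tendsto' htend' step

lemma rep (z : SchwartzMap E3 ℝ) (x : E3) :
    (volume : Measure E3).toSphere univ * ENNReal.ofReal |z x|
      ≤ ∫⁻ y, ENNReal.ofReal ‖fderiv ℝ (⇑z) y‖ * Kern x y := by
  have hfc : Continuous (fderiv ℝ (⇑z)) := (z.smooth ⊤).continuous_fderiv (by simp)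
  set F : E3 → ℝ≥0∞ := fun y => ENNReal.ofReal ‖fderiv ℝ (⇑z) y‖ with hF
  have hFm : Measurable F := ENNReal.measurable_ofReal.comp hfc.norm.measurable
  have htrans : ∫⁻ y, F y * Kern x y = ∫⁻ y, F (x + y) * Kern 0 y := by
    rw [← lintegral_add_left_eq_self (fun w => F w * Kern x w) x]
    refine lintegral_congr fun y => ?_
    congr 1
    unfold Kern
    rw [add_sub_cancel_left, sub_zero]
  have hgm : Measurable fun y => F (x + y) * Kern 0 y := by
    exact ((hFm.comp (measurable_const_add x)).mul (Kern_meas 0))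
  rw [htrans, polar3 _ hgm]
  have hinner : ∀ e : sphere (0:E3) 1,
      ∫⁻ t in Ioi (0:ℝ), ENNReal.ofReal (t^2) * (F (x + t • (e:E3)) * Kern 0 (t • (e:E3)))
        = ∫⁻ t in Ioi (0:ℝ), F (x + t • (e:E3)) := by
    intro e
    refine setLIntegral_congr_fun measurableSet_Ioi (fun t ht => ?_)
    have ht0 : (0:ℝ) < t := ht
    have hnorm : ‖t • (e:E3) - 0‖ = t := by
      rw [sub_zero, norm_smul, mem_sphere_zero_iff_norm.1 e.2, mul_one,
        Real.norm_eq_abs, abs_of_pos ht0]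
    have hK : Kern 0 (t • (e:E3)) = (ENNReal.ofReal (t^2))⁻¹ := by
      unfold Kern; rw [hnorm]
    rw [hK, mul_left_comm, ENNReal.mul_inv_cancel
      (ENNReal.ofReal_pos.2 (pow_pos ht0 2)).ne' ENNReal.ofReal_ne_top, mul_one]
  calc (volume : Measure E3).toSphere univ * ENNReal.ofReal |z x|
      = ∫⁻ _ : sphere (0:E3) 1, ENNReal.ofReal |z x| ∂(volume : Measure E3).toSphere := by
        rw [lintegral_const, mul_comm]
    _ ≤ ∫⁻ e : sphere (0:E3) 1, (∫⁻ t in Ioi (0:ℝ), F (x + t • (e:E3)))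
          ∂(volume : Measure E3).toSphere := by
        refine lintegral_mono fun e => ?_
        exact ray_ftc z x e (mem_sphere_zero_iff_norm.1 e.2)
    _ = _ := by
        refine lintegral_congr fun e => ?_
        rw [hinner e]

lemma layer (z : SchwartzMap E3 ℝ) (x : E3) :
    ∫⁻ y, ENNReal.ofReal ‖fderiv ℝ (⇑z) y‖ * Kern x y
      ≤ ((volume : Measure E3).toSphere univ * (volume (ball (0:E3) 1))⁻¹ ^ ((1:ℝ)/3))
          * ∫⁻ l in Ioi (0:ℝ), (volume {y | l < ‖fderiv ℝ (⇑z) y‖}) ^ ((1:ℝ)/3) := by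
  have hfc : Continuous (fderiv ℝ (⇑z)) := (z.smooth ⊤).continuous_fderiv (by simp)
  set ν := volume.withDensity (Kern x) with hν
  have h1 : ∫⁻ y, ENNReal.ofReal ‖fderiv ℝ (⇑z) y‖ * Kern x y
      = ∫⁻ y, ENNReal.ofReal ‖fderiv ℝ (⇑z) y‖ ∂ν := by
    rw [hν, lintegral_withDensity_eq_lintegral_mul _ (Kern_meas x)
      (show Measurable fun y : E3 => ENNReal.ofReal ‖fderiv ℝ (⇑z) y‖ from
        (ENNReal.continuous_ofReal.comp hfc.norm).measurable)]
    exact lintegral_congr fun y => (mul_comm _ _)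
  rw [h1, lintegral_eq_lintegral_meas_lt ν (ae_of_all _ fun y => norm_nonneg _)
    hfc.norm.aemeasurable]
  calc ∫⁻ l in Ioi (0:ℝ), ν {y | l < ‖fderiv ℝ (⇑z) y‖}
      ≤ ∫⁻ l in Ioi (0:ℝ), ((volume : Measure E3).toSphere univ
          * (volume (ball (0:E3) 1))⁻¹ ^ ((1:ℝ)/3))
          * (volume {y | l < ‖fderiv ℝ (⇑z) y‖}) ^ ((1:ℝ)/3) := by
        refine lintegral_mono fun l => ?_
        have hms : MeasurableSet {y : E3 | l < ‖fderiv ℝ (⇑z) y‖} :=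
          measurableSet_lt measurable_const hfc.norm.measurable
        rw [hν, withDensity_apply _ hms]
        exact bathtub x _ hms
    _ = _ := by
        rw [lintegral_const_mul]
        refine Measurable.pow_const ?_ _
        have hanti : Antitone fun l : ℝ => volume {y : E3 | l < ‖fderiv ℝ (⇑z) y‖} := by
          intro a b hab
          exact measure_mono fun y hy => lt_of_le_of_lt hab hy
        exact hanti.measurable

/-- The Lorentz `L^{3,1}` norm on `ℝ³`, via the layer-cake formula
`‖f‖_{L^{3,1}} = 3 ∫₀^∞ (μ {|f| > λ})^{1/3} dλ`. -/
noncomputable def lorentz31 (f : EuclideanSpace ℝ (Fin 3) → ℝ) : ℝ≥0∞ :=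
  3 * ∫⁻ l in Set.Ioi (0:ℝ), (volume {x | l < |f x|}) ^ ((1:ℝ)/3)

theorem stmt_14 :
    ∃ C : ℝ, 0 < C ∧
      ∀ z : SchwartzMap (EuclideanSpace ℝ (Fin 3)) ℝ, ∀ x,
        ENNReal.ofReal |z x| ≤
          ENNReal.ofReal C * lorentz31 (fun y => ‖fderiv ℝ (⇑z) y‖) := by
  set v := volume (ball (0:E3) 1) with hv
  have hv0 : v ≠ 0 := (measure_ball_pos volume 0 one_pos).ne'
  have hvtop : v ≠ ⊤ := measure_ball_lt_top.ne
  set σS := (volume : Measure E3).toSphere univ with hσS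
  have hσ : σS = ((3:ℕ) : ℝ≥0∞) * v := by
    rw [hσS, Measure.toSphere_apply_univ]
    congr 2
    simp [finrank_euclideanSpace]
  have hσ0 : σS ≠ 0 := by
    rw [hσ]; exact mul_ne_zero (by norm_num) hv0
  have hσtop : σS ≠ ⊤ := by
    rw [hσ]; exact ENNReal.mul_ne_top (by norm_num) hvtop
  have hκtop : v⁻¹ ^ ((1:ℝ)/3) ≠ ⊤ :=
    ENNReal.rpow_ne_top_of_nonneg (by norm_num) (ENNReal.inv_ne_top.2 hv0)
  refine ⟨(v⁻¹ ^ ((1:ℝ)/3)).toReal + 1, by positivity, fun z x => ?_⟩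
  have h := (rep z x).trans (layer z x)
  rw [mul_assoc] at h
  have h2 : ENNReal.ofReal |z x|
      ≤ v⁻¹ ^ ((1:ℝ)/3) * ∫⁻ l in Ioi (0:ℝ),
          (volume {y | l < ‖fderiv ℝ (⇑z) y‖}) ^ ((1:ℝ)/3) :=
    (ENNReal.mul_le_mul_iff_right hσ0 hσtop).1 h
  have hlor : lorentz31 (fun y => ‖fderiv ℝ (⇑z) y‖)
      = 3 * ∫⁻ l in Ioi (0:ℝ), (volume {y | l < ‖fderiv ℝ (⇑z) y‖}) ^ ((1:ℝ)/3) := by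
    simp only [lorentz31, abs_norm]
  rw [hlor]
  refine h2.trans ?_
  refine mul_le_mul' ?_ ?_
  · calc v⁻¹ ^ ((1:ℝ)/3) = ENNReal.ofReal ((v⁻¹ ^ ((1:ℝ)/3)).toReal) :=
          (ENNReal.ofReal_toReal hκtop).symm
      _ ≤ _ := ENNReal.ofReal_le_ofReal (by linarith)
  · exact le_mul_of_one_le_left zero_le (by norm_num)
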